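/- Let X_n be the random variable with probability generating function P_n(z) = (2^n·z·(2+2z)^n + (2-2z)·(2z+1)^n)/2^(3n). Then Var(X_n) = P_n''(1) + P_n'(1) - (P_n'(1))^2 = n/4 + (2 - 2n/3)·(3/8)^n - 4·(3/8)^(2n). -/
import Mathlib
open Polynomial

theorem stmt_4 (n : ℕ) (hn : 1 ≤ n)
    (P : Polynomial ℝ)
    (hP : P = Polynomial.C (((2 : ℝ) ^ (3 * n))⁻¹) *
      ((2 : Polynomial ℝ) ^ n * X * (2 + 2 * X) ^ n + (2 - 2 * X) * (2 * X + 1) ^ n)) :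
    (Polynomial.derivative (Polynomial.derivative P)).eval 1 + (Polynomial.derivative P).eval 1
        - ((Polynomial.derivative P).eval 1) ^ 2
      = (n : ℝ) / 4 + (2 - 2 * (n : ℝ) / 3) * (3 / 8 : ℝ) ^ n - 4 * (3 / 8 : ℝ) ^ (2 * n) := by
  have hpow : ∀ m : ℕ, (3 / 8 : ℝ) ^ m = 3 ^ m / 2 ^ (3 * m) := by
    intro m
    rw [div_pow, pow_mul]
    norm_num
  have h4 : ((2:ℝ) + 2) = 2 ^ 2 := by norm_num
  have h3 : ((2:ℝ) + 1) = 3 := by norm_num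
  have h1 : (Polynomial.derivative P).eval 1 = ((n:ℝ)+2)/2 - 2*(3/8:ℝ)^n := by
    subst hP
    obtain ⟨k, rfl⟩ := Nat.exists_eq_add_of_le hn
    simp [derivative_mul, derivative_pow, Nat.add_sub_cancel_left]
    rw [hpow, h4, h3, ← pow_mul]
    have hne : (2:ℝ) ^ (3 * (1 + k)) ≠ 0 := by positivity
    have hne2 : (2:ℝ) ^ (2 * (1 + k)) ≠ 0 := by positivity
    field_simp
    simp only [← pow_mul]
    ring
  have h2 : (Polynomial.derivative (Polynomial.derivative P)).eval 1
      = ((n:ℝ)^2+3*n)/4 - (8*n/3)*(3/8:ℝ)^n := by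
    subst hP
    rcases n with _ | _ | k
    · omega
    · simp [derivative_mul, derivative_pow]
      norm_num
    · simp [derivative_mul, derivative_pow, Nat.add_sub_cancel]
      rw [hpow, h4, h3, ← pow_mul]
      have hne : (2:ℝ) ^ (3 * (k + 1 + 1)) ≠ 0 := by positivity
      field_simp
      simp only [← pow_mul]
      ring
  rw [h1, h2, mul_comm 2 n, pow_mul]
  ring
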